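/- Let 0 < α < 1, let R > 0, and let a₁, a₂ : ℝ → ℂ be bounded measurable functions supported in [−R, R] such that ∫_{ℝ} a₁(s) ds = 0. Then there exists a constant C > 0 (depending on α, R, and the sup norms of a₁ and a₂) such that for all x ∈ ℝ with |x| ≥ 2R one has |𝓘_{α+1}(a₁,a₂)(x)| ≤ C · |x|^{α−2}. -/

import Mathlib

open MeasureTheory

/-- The bilinear fractional integral operator
`𝓘_{α+1}(f,g)(x) = ∬ f(s) g(t) (|x−s|+|x−t|)^{α−1} ds dt`. -/
noncomputable def biFracInt (α : ℝ) (f g : ℝ → ℂ) (x : ℝ) : ℂ :=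
  ∫ p : ℝ × ℝ, f p.1 * g p.2 * (((|x - p.1| + |x - p.2|) ^ (α - 1) : ℝ) : ℂ)

/-- Mean value estimate for negative powers: on `[c, ∞)` with `c > 0`, the
function `u ↦ u ^ p` (with `p < 0`) is Lipschitz with constant `(-p) * c ^ (p-1)`. -/
lemma rpow_sub_rpow_abs_le {p c a b : ℝ} (hc : 0 < c) (hp : p < 0)
    (ha : c ≤ a) (hb : c ≤ b) :
    |a ^ p - b ^ p| ≤ (-p) * c ^ (p - 1) * |a - b| := by
  have hderiv : ∀ u ∈ Set.Ici c,
      HasDerivWithinAt (fun u : ℝ => u ^ p) (p * u ^ (p - 1)) (Set.Ici c) u := by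
    intro u hu
    exact (Real.hasDerivAt_rpow_const (Or.inl (hc.trans_le hu).ne')).hasDerivWithinAt
  have hbound : ∀ u ∈ Set.Ici c, ‖p * u ^ (p - 1)‖ ≤ (-p) * c ^ (p - 1) := by
    intro u hu
    have hu0 : 0 < u := hc.trans_le hu
    rw [norm_mul, Real.norm_eq_abs, Real.norm_eq_abs, abs_of_neg hp,
      abs_of_nonneg (Real.rpow_nonneg hu0.le _)]
    exact mul_le_mul_of_nonneg_left
      (Real.rpow_le_rpow_of_nonpos hc hu (by linarith)) (by linarith)
  have := (convex_Ici c).norm_image_sub_le_of_norm_hasDerivWithin_le hderiv hbound hb ha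
  simpa [Real.norm_eq_abs] using this

/-- For `0 < α < 1`, `R > 0`, and bounded measurable `a₁, a₂`
supported in `[−R, R]` with `∫ a₁ = 0`, there is `C > 0` such that
`|𝓘_{α+1}(a₁,a₂)(x)| ≤ C·|x|^{α−2}` whenever `|x| ≥ 2R`. -/
theorem stmt_5 (α R : ℝ) (hα0 : 0 < α) (hα1 : α < 1) (hR : 0 < R)
    (a₁ a₂ : ℝ → ℂ) (h₁m : Measurable a₁) (h₂m : Measurable a₂)
    (h₁b : ∃ M, ∀ s, ‖a₁ s‖ ≤ M) (h₂b : ∃ M, ∀ t, ‖a₂ t‖ ≤ M)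
    (h₁s : Function.support a₁ ⊆ Set.Icc (-R) R)
    (h₂s : Function.support a₂ ⊆ Set.Icc (-R) R)
    (h₁0 : ∫ s : ℝ, a₁ s = 0) :
    ∃ C > 0, ∀ x : ℝ, 2 * R ≤ |x| →
      ‖biFracInt α a₁ a₂ x‖ ≤ C * |x| ^ (α - 2) := by
  obtain ⟨M₁, hM₁⟩ := h₁b
  obtain ⟨M₂, hM₂⟩ := h₂b
  have hM₁0 : 0 ≤ M₁ := (norm_nonneg (a₁ 0)).trans (hM₁ 0)
  have hM₂0 : 0 ≤ M₂ := (norm_nonneg (a₂ 0)).trans (hM₂ 0)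
  have h1α : (0:ℝ) < 1 - α := by linarith
  have h2pow : (0:ℝ) < (2:ℝ) ^ (2 - α) := Real.rpow_pos_of_pos two_pos _
  set C₀ : ℝ := M₁ * M₂ * (1 - α) * R * (2:ℝ) ^ (2 - α) * (2 * R) ^ 2 with hC₀
  have hC₀0 : 0 ≤ C₀ := by positivity
  refine ⟨C₀ + 1, by linarith, ?_⟩
  intro x hx
  have hx0 : 0 < |x| := lt_of_lt_of_le (by linarith) hx
  have hxhalf : 0 < |x| / 2 := by linarith
  set S : Set (ℝ × ℝ) := Set.Icc (-R) R ×ˢ Set.Icc (-R) R with hS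
  have hSm : MeasurableSet S := (measurableSet_Icc.prod measurableSet_Icc)
  have hSfin : volume S ≠ ⊤ := (isCompact_Icc.prod isCompact_Icc).measure_lt_top.ne
  have hSvol : (volume S).toReal = (2 * R) * (2 * R) := by
    rw [hS, Measure.volume_eq_prod, Measure.prod_prod, Real.volume_Icc,
      ENNReal.toReal_mul, ENNReal.toReal_ofReal (by linarith)]
    ring
  set K : ℝ × ℝ → ℝ := fun p => (|x - p.1| + |x - p.2|) ^ (α - 1) with hK
  set K0 : ℝ → ℝ := fun t => (|x| + |x - t|) ^ (α - 1) with hK0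
  set F : ℝ × ℝ → ℂ := fun p => a₁ p.1 * a₂ p.2 * ((K p : ℝ) : ℂ) with hF
  set G : ℝ × ℝ → ℂ := fun p => a₁ p.1 * a₂ p.2 * ((K0 p.2 : ℝ) : ℂ) with hG
  have hrpowm : Measurable (fun u : ℝ => u ^ (α - 1)) :=
    measurable_of_continuousOn_compl_singleton 0 (fun u hu =>
      (Real.continuousAt_rpow_const u _ (Or.inl hu)).continuousWithinAt)
  have hKm : Measurable K :=
    hrpowm.comp ((measurable_const.sub measurable_fst).abs.add
      (measurable_const.sub measurable_snd).abs)
  have hK0m : Measurable K0 :=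
    hrpowm.comp ((measurable_const.add (measurable_const.sub measurable_id).abs))
  have hFm : Measurable F :=
    ((h₁m.comp measurable_fst).mul (h₂m.comp measurable_snd)).mul
      (Complex.measurable_ofReal.comp hKm)
  have hGm : Measurable G :=
    ((h₁m.comp measurable_fst).mul (h₂m.comp measurable_snd)).mul
      (Complex.measurable_ofReal.comp (hK0m.comp measurable_snd))
  -- supports
  have hzero : ∀ p : ℝ × ℝ, p ∉ S → a₁ p.1 * a₂ p.2 = 0 := by
    intro p hp
    have : p.1 ∉ Set.Icc (-R) R ∨ p.2 ∉ Set.Icc (-R) R := by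
      by_contra h
      push_neg at h
      exact hp ⟨h.1, h.2⟩
    rcases this with h | h
    · have : a₁ p.1 = 0 := Function.notMem_support.mp (fun hs => h (h₁s hs))
      rw [this, zero_mul]
    · have : a₂ p.2 = 0 := Function.notMem_support.mp (fun hs => h (h₂s hs))
      rw [this, mul_zero]
  have hFs : Function.support F ⊆ S := by
    intro p hp
    by_contra hps
    exact hp (by show a₁ p.1 * a₂ p.2 * ((K p : ℝ) : ℂ) = 0; rw [hzero p hps, zero_mul])
  have hGs : Function.support G ⊆ S := by
    intro p hp
    by_contra hps
    exact hp (by show a₁ p.1 * a₂ p.2 * ((K0 p.2 : ℝ) : ℂ) = 0; rw [hzero p hps, zero_mul])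
  -- lower bounds for kernel bases on S
  have hbase1 : ∀ p : ℝ × ℝ, p ∈ S → |x| / 2 ≤ |x - p.1| + |x - p.2| := by
    rintro ⟨s, t⟩ ⟨hs, ht⟩
    have hs' : |s| ≤ R := abs_le.mpr ⟨hs.1, hs.2⟩
    have h1 : |x| - |s| ≤ |x - s| := abs_sub_abs_le_abs_sub x s
    have h2 : (0:ℝ) ≤ |x - t| := abs_nonneg _
    simp only
    linarith
  have hbase2 : ∀ t : ℝ, |x| / 2 ≤ |x| + |x - t| := by
    intro t
    have := abs_nonneg (x - t)
    linarith
  -- pointwise bound for the difference on S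
  have hdiff : ∀ p ∈ S, ‖F p - G p‖ ≤ M₁ * M₂ * ((1 - α) * (|x| / 2) ^ (α - 2) * R) := by
    rintro ⟨s, t⟩ hp
    obtain ⟨hs, ht⟩ := hp
    have hs' : |s| ≤ R := abs_le.mpr ⟨hs.1, hs.2⟩
    have hKdiff : |K (s, t) - K0 t| ≤ (1 - α) * (|x| / 2) ^ (α - 2) * R := by
      have habdiff : |(|x - s| + |x - t|) - (|x| + |x - t|)| ≤ R := by
        have h1 := abs_abs_sub_abs_le_abs_sub (x - s) x
        have h2 : |x - s - x| = |s| := by rw [show x - s - x = -s by ring, abs_neg]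
        have h3 : (|x - s| + |x - t|) - (|x| + |x - t|) = |x - s| - |x| := by ring
        rw [h3]
        rw [h2] at h1
        exact h1.trans hs'
      have key := rpow_sub_rpow_abs_le (p := α - 1) hxhalf (by linarith)
        (hbase1 (s, t) ⟨hs, ht⟩) (hbase2 t)
      show |(|x - s| + |x - t|) ^ (α - 1) - (|x| + |x - t|) ^ (α - 1)| ≤
        (1 - α) * (|x| / 2) ^ (α - 2) * R
      calc |(|x - s| + |x - t|) ^ (α - 1) - (|x| + |x - t|) ^ (α - 1)|
          ≤ (-(α - 1)) * (|x| / 2) ^ (α - 1 - 1) *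
            |(|x - s| + |x - t|) - (|x| + |x - t|)| := key
        _ ≤ (1 - α) * (|x| / 2) ^ (α - 2) * R := by
            rw [show -(α - 1) = 1 - α by ring, show α - 1 - 1 = α - 2 by ring]
            exact mul_le_mul_of_nonneg_left habdiff (by positivity)
    have hFG : F (s, t) - G (s, t) = a₁ s * a₂ t * (((K (s, t) : ℝ) : ℂ) - ((K0 t : ℝ) : ℂ)) := by
      show a₁ s * a₂ t * ((K (s, t) : ℝ) : ℂ) - a₁ s * a₂ t * ((K0 t : ℝ) : ℂ) = _
      ring
    rw [hFG]
    rw [norm_mul, norm_mul]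
    have hnormc : ‖(((K (s, t) : ℝ) : ℂ) - ((K0 t : ℝ) : ℂ))‖ = |K (s, t) - K0 t| := by
      rw [← Complex.ofReal_sub, Complex.norm_real, Real.norm_eq_abs]
    rw [hnormc]
    have h1 := hM₁ s
    have h2 := hM₂ t
    exact mul_le_mul (mul_le_mul h1 h2 (norm_nonneg _) hM₁0) hKdiff
      (abs_nonneg _) (by positivity)
  -- integrability
  have hFbdd : ∀ p ∈ S, ‖F p‖ ≤ M₁ * M₂ * (|x| / 2) ^ (α - 1) := by
    intro p hp
    show ‖a₁ p.1 * a₂ p.2 * ((K p : ℝ) : ℂ)‖ ≤ _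
    rw [norm_mul, norm_mul, Complex.norm_real, Real.norm_eq_abs]
    have hKb : |K p| ≤ (|x| / 2) ^ (α - 1) := by
      show |(|x - p.1| + |x - p.2|) ^ (α - 1)| ≤ _
      rw [abs_of_nonneg (Real.rpow_nonneg (by positivity) _)]
      exact Real.rpow_le_rpow_of_nonpos hxhalf (hbase1 p hp) (by linarith)
    exact mul_le_mul (mul_le_mul (hM₁ _) (hM₂ _) (norm_nonneg _) hM₁0) hKb
      (abs_nonneg _) (by positivity)
  have hGbdd : ∀ p ∈ S, ‖G p‖ ≤ M₁ * M₂ * (|x| / 2) ^ (α - 1) := by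
    intro p _
    show ‖a₁ p.1 * a₂ p.2 * ((K0 p.2 : ℝ) : ℂ)‖ ≤ _
    rw [norm_mul, norm_mul, Complex.norm_real, Real.norm_eq_abs]
    have hKb : |K0 p.2| ≤ (|x| / 2) ^ (α - 1) := by
      show |(|x| + |x - p.2|) ^ (α - 1)| ≤ _
      rw [abs_of_nonneg (Real.rpow_nonneg (by positivity) _)]
      exact Real.rpow_le_rpow_of_nonpos hxhalf (hbase2 p.2) (by linarith)
    exact mul_le_mul (mul_le_mul (hM₁ _) (hM₂ _) (norm_nonneg _) hM₁0) hKb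
      (abs_nonneg _) (by positivity)
  have hFint : Integrable F := by
    rw [← integrableOn_iff_integrable_of_support_subset hFs]
    exact Measure.integrableOn_of_bounded hSfin hFm.aestronglyMeasurable
      (ae_restrict_of_forall_mem hSm hFbdd)
  have hGint : Integrable G := by
    rw [← integrableOn_iff_integrable_of_support_subset hGs]
    exact Measure.integrableOn_of_bounded hSfin hGm.aestronglyMeasurable
      (ae_restrict_of_forall_mem hSm hGbdd)
  -- cancellation: ∫ G = 0
  have hGzero : ∫ p : ℝ × ℝ, G p = 0 := by
    have h : ∫ p : ℝ × ℝ, G p = ∫ p : ℝ × ℝ, a₁ p.1 * (a₂ p.2 * ((K0 p.2 : ℝ) : ℂ)) := by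
      congr 1
      funext p
      show a₁ p.1 * a₂ p.2 * ((K0 p.2 : ℝ) : ℂ) = _
      ring
    have h2 := MeasureTheory.integral_prod_mul (μ := volume) (ν := volume) a₁
      (fun t : ℝ => a₂ t * ((K0 t : ℝ) : ℂ))
    rw [h₁0, zero_mul] at h2
    rw [h, Measure.volume_eq_prod]
    exact h2
  -- assemble
  have hmain : biFracInt α a₁ a₂ x = ∫ p : ℝ × ℝ, (F p - G p) := by
    rw [integral_sub hFint hGint, hGzero, sub_zero]
    rfl
  have hsub_support : ∀ p : ℝ × ℝ, p ∉ S → F p - G p = 0 := by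
    intro p hp
    have h1 : F p = 0 := Function.notMem_support.mp (fun h => hp (hFs h))
    have h2 : G p = 0 := Function.notMem_support.mp (fun h => hp (hGs h))
    rw [h1, h2, sub_zero]
  have hsetInt : ∫ p : ℝ × ℝ, (F p - G p) = ∫ p in S, (F p - G p) :=
    (setIntegral_eq_integral_of_forall_compl_eq_zero hsub_support).symm
  have hbound : ‖∫ p in S, (F p - G p)‖ ≤
      M₁ * M₂ * ((1 - α) * (|x| / 2) ^ (α - 2) * R) * (volume S).toReal :=
    norm_setIntegral_le_of_norm_le_const hSfin.lt_top hdiff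
  have hsplit : (|x| / 2) ^ (α - 2) = (2:ℝ) ^ (2 - α) * |x| ^ (α - 2) := by
    rw [Real.div_rpow (abs_nonneg x) (by norm_num : (0:ℝ) ≤ 2), div_eq_mul_inv,
      ← Real.rpow_neg (by norm_num : (0:ℝ) ≤ 2), show -(α - 2) = 2 - α by ring]
    ring
  have hxpow : (0:ℝ) ≤ |x| ^ (α - 2) := Real.rpow_nonneg (abs_nonneg x) _
  calc ‖biFracInt α a₁ a₂ x‖
      = ‖∫ p in S, (F p - G p)‖ := by rw [hmain, hsetInt]
    _ ≤ M₁ * M₂ * ((1 - α) * (|x| / 2) ^ (α - 2) * R) * (volume S).toReal := hbound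
    _ = C₀ * |x| ^ (α - 2) := by rw [hSvol, hsplit, hC₀]; ring
    _ ≤ (C₀ + 1) * |x| ^ (α - 2) := by nlinarith
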